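/- Let C be a ternary self-dual code of length n with minimum weight at least 6. Then C is decomposable if and only if the Construction A lattice A₃(C) is decomposable (an orthogonal direct sum of two nonzero sublattices). -/

import Mathlib

open scoped BigOperators

namespace Ternary

/-- Hamming weight of a ternary vector. -/
def wt {n : ℕ} (x : Fin n → ZMod 3) : ℕ :=
  (Finset.filter (fun i => x i ≠ 0) Finset.univ).card

/-- Dual of a set of ternary vectors under the standard inner product. -/
def dualCode {n : ℕ} (C : Set (Fin n → ZMod 3)) : Set (Fin n → ZMod 3) :=
  {x | ∀ y ∈ C, ∑ i, x i * y i = 0}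

/-- A ternary self-dual code (self-duality forces linearity). -/
def IsSelfDual {n : ℕ} (C : Set (Fin n → ZMod 3)) : Prop :=
  dualCode C = C

/-- `C` has minimum weight `d`. -/
def HasMinWeight {n : ℕ} (C : Set (Fin n → ZMod 3)) (d : ℕ) : Prop :=
  (∃ x ∈ C, x ≠ 0 ∧ wt x = d) ∧ ∀ x ∈ C, x ≠ 0 → d ≤ wt x

/-- A monomial matrix: exactly one nonzero entry in each row and each column. -/
def IsMonomial {n : ℕ} (P : Matrix (Fin n) (Fin n) (ZMod 3)) : Prop :=
  (∀ i, ∃! j, P i j ≠ 0) ∧ (∀ j, ∃! i, P i j ≠ 0)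

/-- The code `C · P = {xP : x ∈ C}`. -/
def codeMul {n : ℕ} (C : Set (Fin n → ZMod 3)) (P : Matrix (Fin n) (Fin n) (ZMod 3)) :
    Set (Fin n → ZMod 3) :=
  (fun x => Matrix.vecMul x P) '' C

/-- Equivalence of ternary codes via monomial matrices. -/
def CodeEquiv {n : ℕ} (C C' : Set (Fin n → ZMod 3)) : Prop :=
  ∃ P, IsMonomial P ∧ C' = codeMul C P

/-- Standard inner product on `ℝⁿ`. -/
noncomputable def ip {n : ℕ} (x y : Fin n → ℝ) : ℝ := ∑ i, x i * y i

/-- Construction A lattice `A₃(C) = (1/√3){x ∈ ℤⁿ : x mod 3 ∈ C}`. -/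
def A3 {n : ℕ} (C : Set (Fin n → ZMod 3)) : Set (Fin n → ℝ) :=
  {v | ∃ y : Fin n → ℤ, (fun i => ((y i : ZMod 3))) ∈ C ∧
        v = fun i => (y i : ℝ) / Real.sqrt 3}

/-- The dual lattice (as a set): vectors with integral inner product with all of `L`. -/
def dualLattice {n : ℕ} (L : Set (Fin n → ℝ)) : Set (Fin n → ℝ) :=
  {x | ∀ y ∈ L, ∃ m : ℤ, ip x y = (m : ℝ)}

/-- A 3-frame of `L`: vectors `f₁, …, fₙ ∈ L` with `(fᵢ, fⱼ) = 3δᵢⱼ`. -/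
def IsFrame {n : ℕ} (L : Set (Fin n → ℝ)) (f : Fin n → Fin n → ℝ) : Prop :=
  (∀ i, f i ∈ L) ∧ ∀ i j, ip (f i) (f j) = if i = j then 3 else 0

/-- The map `π_F(x) = ((x,f₁) mod 3, …, (x,fₙ) mod 3)`, realized via `Int.floor`
(which agrees with `(x, fᵢ)` whenever that inner product is an integer). -/
noncomputable def piF {n : ℕ} (f : Fin n → Fin n → ℝ) (x : Fin n → ℝ) :
    Fin n → ZMod 3 :=
  fun i => ((⌊ip x (f i)⌋ : ℤ) : ZMod 3)

/-- The even sublattice `B₃(C)` of `A₃(C)`. -/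
def B3 {n : ℕ} (C : Set (Fin n → ZMod 3)) : Set (Fin n → ℝ) :=
  {v ∈ A3 C | ∃ m : ℤ, ip v v = 2 * (m : ℝ)}

/-- A decomposable code: a direct sum of two nonzero codes supported on
complementary sets of coordinates. -/
def IsDecomposableCode {n : ℕ} (C : Set (Fin n → ZMod 3)) : Prop :=
  ∃ S : Set (Fin n),
    (∃ x ∈ C, x ≠ 0 ∧ ∀ i ∉ S, x i = 0) ∧
    (∃ x ∈ C, x ≠ 0 ∧ ∀ i ∈ S, x i = 0) ∧
    (∀ x ∈ C, S.indicator x ∈ C)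

/-- A decomposable lattice: an orthogonal direct sum of two nonzero sublattices. -/
def IsDecomposableLattice {n : ℕ} (L : Set (Fin n → ℝ)) : Prop :=
  ∃ L₁ L₂ : Submodule ℤ (Fin n → ℝ),
    (L₁ : Set (Fin n → ℝ)) ⊆ L ∧ (L₂ : Set (Fin n → ℝ)) ⊆ L ∧
    (∃ x ∈ L₁, x ≠ (0 : Fin n → ℝ)) ∧ (∃ x ∈ L₂, x ≠ (0 : Fin n → ℝ)) ∧
    (∀ a ∈ L₁, ∀ b ∈ L₂, ip a b = 0) ∧
    L = {x | ∃ a ∈ L₁, ∃ b ∈ L₂, x = a + b}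

/-- The real all-ones vector. -/
def allOnesR (n : ℕ) : Fin n → ℝ := fun _ => 1

/-- The vector `e₁ = (√3, 0, …, 0)`. -/
noncomputable def e1 (n : ℕ) : Fin n → ℝ := fun i => if (i : ℕ) = 0 then Real.sqrt 3 else 0

/-- The straight construction `L_S(C) = ⟨(1/(2√3))𝟏, B₃(C)⟩`. -/
noncomputable def LS {n : ℕ} (C : Set (Fin n → ZMod 3)) : Set (Fin n → ℝ) :=
  {x | ∃ (m : ℤ) (b : Fin n → ℝ), b ∈ B3 C ∧
        x = (m : ℝ) • ((2 * Real.sqrt 3)⁻¹ • allOnesR n) + b}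

/-- The twisted construction `L_T(C) = ⟨(1/(2√3))𝟏 - e₁, B₃(C)⟩`. -/
noncomputable def LT {n : ℕ} (C : Set (Fin n → ZMod 3)) : Set (Fin n → ℝ) :=
  {x | ∃ (m : ℤ) (b : Fin n → ℝ), b ∈ B3 C ∧
        x = (m : ℝ) • ((2 * Real.sqrt 3)⁻¹ • allOnesR n - e1 n) + b}


section AuxLemmas
variable {n : ℕ} {C : Set (Fin n → ZMod 3)}

lemma sd_zero (hC : IsSelfDual C) : (0 : Fin n → ZMod 3) ∈ C := by
  rw [← hC]; intro y hy; simp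

lemma sd_add (hC : IsSelfDual C) {x z : Fin n → ZMod 3} (hx : x ∈ C) (hz : z ∈ C) :
    x + z ∈ C := by
  rw [← hC] at hx hz ⊢
  intro y hy
  simp only [Pi.add_apply, add_mul, Finset.sum_add_distrib, hx y hy, hz y hy, add_zero]

lemma sd_sub (hC : IsSelfDual C) {x z : Fin n → ZMod 3} (hx : x ∈ C) (hz : z ∈ C) :
    x - z ∈ C := by
  rw [← hC] at hx hz ⊢
  intro y hy
  simp only [Pi.sub_apply, sub_mul, Finset.sum_sub_distrib, hx y hy, hz y hy, sub_zero]

lemma sd_smul (hC : IsSelfDual C) (c : ZMod 3) {x : Fin n → ZMod 3} (hx : x ∈ C) :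
    (fun i => c * x i) ∈ C := by
  rw [← hC] at hx ⊢
  intro y hy
  simp only [mul_assoc, ← Finset.mul_sum, hx y hy, mul_zero]

lemma sqrt3_pos : (0:ℝ) < Real.sqrt 3 := by positivity
lemma sqrt3_ne : Real.sqrt 3 ≠ 0 := ne_of_gt sqrt3_pos
lemma sqrt3_sq : Real.sqrt 3 * Real.sqrt 3 = 3 := Real.mul_self_sqrt (by norm_num)

lemma a3_zero (hC : IsSelfDual C) : (0 : Fin n → ℝ) ∈ A3 C :=
  ⟨0, by simpa using (show (fun _ : Fin n => (0 : ZMod 3)) ∈ C from sd_zero hC), by funext i; simp⟩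

lemma a3_add (hC : IsSelfDual C) {u v : Fin n → ℝ} (hu : u ∈ A3 C) (hv : v ∈ A3 C) :
    u + v ∈ A3 C := by
  obtain ⟨y, hy, rfl⟩ := hu
  obtain ⟨z, hz, rfl⟩ := hv
  refine ⟨y + z, ?_, ?_⟩
  · have : (fun i => (((y+z) i : ℤ) : ZMod 3)) =
      (fun i => ((y i : ZMod 3))) + (fun i => ((z i : ZMod 3))) := by
      funext i; simp [Pi.add_apply]
    rw [this]; exact sd_add hC hy hz
  · funext i; simp [add_div]

lemma a3_zsmul (hC : IsSelfDual C) (m : ℤ) {v : Fin n → ℝ} (hv : v ∈ A3 C) :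
    m • v ∈ A3 C := by
  obtain ⟨y, hy, rfl⟩ := hv
  refine ⟨m • y, ?_, ?_⟩
  · have : (fun i => (((m • y) i : ℤ) : ZMod 3)) =
      (fun i => (m : ZMod 3) * ((y i : ZMod 3))) := by
      funext i; simp only [Pi.smul_apply, smul_eq_mul]; push_cast; ring
    rw [this]; exact sd_smul hC _ hy
  · funext i
    simp only [Pi.smul_apply, smul_eq_mul, zsmul_eq_mul]
    push_cast
    ring

lemma ip_self_int (y : Fin n → ℤ) :
    ip (fun i => (y i : ℝ) / Real.sqrt 3) (fun i => (y i : ℝ) / Real.sqrt 3)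
      = (∑ i, ((y i : ℝ))^2) / 3 := by
  rw [ip, Finset.sum_div]
  refine Finset.sum_congr rfl fun i _ => ?_
  rw [div_mul_div_comm, sqrt3_sq, sq]

lemma a3_min_norm (hC : IsSelfDual C) (hmin : ∀ x ∈ C, x ≠ 0 → 6 ≤ wt x)
    {v : Fin n → ℝ} (hv : v ∈ A3 C) (hne : v ≠ 0) : (2:ℝ) ≤ ip v v := by
  obtain ⟨y, hy, rfl⟩ := hv
  have hyne : ∃ i, y i ≠ 0 := by
    by_contra h
    push_neg at h
    exact hne (funext fun i => by simp [h i])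
  obtain ⟨i₀, hi₀⟩ := hyne
  have key : (6:ℤ) ≤ ∑ i, (y i)^2 := by
    by_cases hx : (fun i => ((y i : ZMod 3))) = (0 : Fin n → ZMod 3)
    · -- all coords divisible by 3
      have hdvd : (3:ℤ) ∣ y i₀ := by
        have := congrFun hx i₀
        simpa using (ZMod.intCast_zmod_eq_zero_iff_dvd (y i₀) 3).mp this
      obtain ⟨k, hk⟩ := hdvd
      have hk0 : k ≠ 0 := by rintro rfl; simp [hk] at hi₀
      have h9 : (9:ℤ) ≤ (y i₀)^2 := by
        have h1 : 1 ≤ |k| := Int.one_le_abs hk0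
        have : 1 ≤ k^2 := by nlinarith [sq_abs k]
        rw [hk]; nlinarith
      calc (6:ℤ) ≤ (y i₀)^2 := by linarith
        _ ≤ ∑ i, (y i)^2 :=
          Finset.single_le_sum (fun i _ => sq_nonneg (y i)) (Finset.mem_univ i₀)
    · have hwt : 6 ≤ wt (fun i => ((y i : ZMod 3))) := hmin _ hy hx
      have h1 : ∀ i ∈ Finset.filter (fun i => ((y i : ZMod 3)) ≠ 0) Finset.univ,
          (1:ℤ) ≤ (y i)^2 := by
        intro i hi
        have : y i ≠ 0 := by
          rintro h0
          simp [h0] at hi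
        have := Int.one_le_abs this
        nlinarith [sq_abs (y i)]
      have h2 : (6:ℤ) ≤ ∑ i ∈ Finset.filter (fun i => ((y i : ZMod 3)) ≠ 0) Finset.univ,
          (y i)^2 := by
        calc (6:ℤ) ≤ (Finset.filter (fun i => ((y i : ZMod 3)) ≠ 0) Finset.univ).card := by
              exact_mod_cast hwt
          _ ≤ _ := by
              simpa using Finset.card_nsmul_le_sum _ _ (1:ℤ) h1
      calc (6:ℤ) ≤ _ := h2
        _ ≤ ∑ i, (y i)^2 :=
          Finset.sum_le_sum_of_subset_of_nonneg (Finset.filter_subset _ _)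
            (fun i _ _ => sq_nonneg (y i))
  rw [ip_self_int]
  have : (6:ℝ) ≤ ∑ i, ((y i : ℝ))^2 := by exact_mod_cast key
  linarith

def suppSub (C : Set (Fin n → ZMod 3)) (hC : IsSelfDual C) (S : Set (Fin n)) :
    Submodule ℤ (Fin n → ℝ) where
  carrier := {v | v ∈ A3 C ∧ ∀ i ∉ S, v i = 0}
  zero_mem' := ⟨a3_zero hC, fun i _ => rfl⟩
  add_mem' := fun {a b} ha hb => ⟨a3_add hC ha.1 hb.1, fun i hi => by
    simp [ha.2 i hi, hb.2 i hi]⟩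
  smul_mem' := fun m v hv => ⟨a3_zsmul hC m hv.1, fun i hi => by
    simp [hv.2 i hi]⟩

lemma mem_suppSub {hC : IsSelfDual C} {S : Set (Fin n)} {v : Fin n → ℝ} :
    v ∈ suppSub C hC S ↔ v ∈ A3 C ∧ ∀ i ∉ S, v i = 0 := Iff.rfl

lemma ip_add_add (a b : Fin n → ℝ) :
    ip (a + b) (a + b) = ip a a + 2 * ip a b + ip b b := by
  simp only [ip, Pi.add_apply, Finset.mul_sum, ← Finset.sum_add_distrib]
  exact Finset.sum_congr rfl fun i _ => by ring
end AuxLemmas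

/-- A ternary self-dual code `C` of length `n` with minimum
weight at least 6 is decomposable iff `A₃(C)` is decomposable. -/
theorem decomposable_iff_A3_decomposable (n : ℕ) (C : Set (Fin n → ZMod 3))
    (hC : IsSelfDual C) (hmin : ∀ x ∈ C, x ≠ 0 → 6 ≤ wt x) :
    IsDecomposableCode C ↔ IsDecomposableLattice (A3 C) := by
  constructor
  · intro h
    classical
    obtain ⟨S, ⟨x₁, hx₁C, hx₁ne, hx₁s⟩, ⟨x₂, hx₂C, hx₂ne, hx₂s⟩, hind⟩ := h
    refine ⟨suppSub C hC S, suppSub C hC Sᶜ,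
      fun v hv => (mem_suppSub.mp hv).1, fun v hv => (mem_suppSub.mp hv).1, ?_, ?_, ?_, ?_⟩
    · refine ⟨fun i => (((x₁ i).val : ℤ) : ℝ) / Real.sqrt 3,
        mem_suppSub.mpr ⟨⟨fun i => ((x₁ i).val : ℤ), ?_, rfl⟩, ?_⟩, ?_⟩
      · have : (fun i => ((((x₁ i).val : ℤ) : ZMod 3))) = x₁ := by
          funext i; push_cast; simp [ZMod.natCast_val]
        rw [this]; exact hx₁C
      · intro i hi; simp [hx₁s i hi]
      · obtain ⟨i, hi⟩ := Function.ne_iff.mp hx₁ne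
        intro h0
        have hval : (x₁ i).val ≠ 0 := by
          simpa [ZMod.val_eq_zero] using hi
        have h1 : (((x₁ i).val : ℤ) : ℝ) / Real.sqrt 3 = 0 := congrFun h0 i
        rcases div_eq_zero_iff.mp h1 with h | h
        · exact hval (by exact_mod_cast h)
        · exact sqrt3_ne h
    · refine ⟨fun i => (((x₂ i).val : ℤ) : ℝ) / Real.sqrt 3,
        mem_suppSub.mpr ⟨⟨fun i => ((x₂ i).val : ℤ), ?_, rfl⟩, ?_⟩, ?_⟩
      · have : (fun i => ((((x₂ i).val : ℤ) : ZMod 3))) = x₂ := by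
          funext i; push_cast; simp [ZMod.natCast_val]
        rw [this]; exact hx₂C
      · intro i hi
        have : i ∈ S := Set.notMem_compl_iff.mp hi
        simp [hx₂s i this]
      · obtain ⟨i, hi⟩ := Function.ne_iff.mp hx₂ne
        intro h0
        have hval : (x₂ i).val ≠ 0 := by
          simpa [ZMod.val_eq_zero] using hi
        have h1 : (((x₂ i).val : ℤ) : ℝ) / Real.sqrt 3 = 0 := congrFun h0 i
        rcases div_eq_zero_iff.mp h1 with h | h
        · exact hval (by exact_mod_cast h)
        · exact sqrt3_ne h
    · intro a ha b hb
      rw [ip]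
      refine Finset.sum_eq_zero fun i _ => ?_
      by_cases hi : i ∈ S
      · rw [(mem_suppSub.mp hb).2 i (by simpa using hi), mul_zero]
      · rw [(mem_suppSub.mp ha).2 i hi, zero_mul]
    · ext v
      constructor
      · rintro ⟨y, hyC, rfl⟩
        refine ⟨fun i => if i ∈ S then (y i : ℝ)/Real.sqrt 3 else 0,
          mem_suppSub.mpr ⟨⟨fun i => if i ∈ S then y i else 0, ?_, ?_⟩, ?_⟩,
          fun i => if i ∈ S then 0 else (y i : ℝ)/Real.sqrt 3,
          mem_suppSub.mpr ⟨⟨fun i => if i ∈ S then 0 else y i, ?_, ?_⟩, ?_⟩, ?_⟩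
        · have : (fun i => (((if i ∈ S then y i else 0 : ℤ)) : ZMod 3)) =
            S.indicator (fun i => ((y i : ZMod 3))) := by
            funext i; by_cases hi : i ∈ S <;> simp [Set.indicator_apply, hi]
          rw [this]; exact hind _ hyC
        · funext i; by_cases hi : i ∈ S <;> simp [hi]
        · intro i hi; simp [hi]
        · have : (fun i => (((if i ∈ S then 0 else y i : ℤ)) : ZMod 3)) =
            (fun i => ((y i : ZMod 3))) - S.indicator (fun i => ((y i : ZMod 3))) := by
            funext i; by_cases hi : i ∈ S <;> simp [Set.indicator_apply, hi]
          rw [this]; exact sd_sub hC hyC (hind _ hyC)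
        · funext i; by_cases hi : i ∈ S <;> simp [hi]
        · intro i hi
          have : i ∈ S := Set.notMem_compl_iff.mp hi
          simp [this]
        · funext i; by_cases hi : i ∈ S <;> simp [hi]
      · rintro ⟨a, ha, b, hb, rfl⟩
        exact a3_add hC (mem_suppSub.mp ha).1 (mem_suppSub.mp hb).1
  · intro h
    classical
    obtain ⟨L₁, L₂, hL₁sub, hL₂sub, ⟨a₀, ha₀, ha₀ne⟩, ⟨b₀, hb₀, hb₀ne⟩, horth, hL⟩ := h
    set f : Fin n → (Fin n → ℝ) := fun i j => if j = i then Real.sqrt 3 else 0 with hf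
    -- frame vectors are in the lattice
    have hfA3 : ∀ i, f i ∈ A3 C := by
      intro i
      refine ⟨fun j => if j = i then 3 else 0, ?_, ?_⟩
      · have : (fun j => (((if j = i then 3 else 0 : ℤ)) : ZMod 3)) = (0 : Fin n → ZMod 3) := by
          funext j
          by_cases hj : j = i
          · simp [hj]; decide
          · simp [hj]
        rw [this]; exact sd_zero hC
      · funext j
        by_cases hj : j = i
        · simp only [hf, hj, if_pos]
          rw [eq_div_iff sqrt3_ne, sqrt3_sq]
          norm_num
        · simp [hf, hj]
    have hipff : ∀ i, ip (f i) (f i) = 3 := by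
      intro i
      rw [ip]
      rw [Finset.sum_eq_single i]
      · simp [hf, sqrt3_sq]
      · intro j _ hj; simp [hf, hj]
      · simp
    have hipf_left : ∀ (i : Fin n) (b : Fin n → ℝ), ip (f i) b = Real.sqrt 3 * b i := by
      intro i b
      rw [ip, Finset.sum_eq_single i]
      · simp [hf]
      · intro j _ hj; simp [hf, hj]
      · simp
    have hipf_right : ∀ (i : Fin n) (a : Fin n → ℝ), ip a (f i) = a i * Real.sqrt 3 := by
      intro i a
      rw [ip, Finset.sum_eq_single i]
      · simp [hf]
      · intro j _ hj; simp [hf, hj]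
      · simp
    -- each frame vector is wholly in L₁ or L₂
    have hsplit : ∀ i, f i ∈ L₁ ∨ f i ∈ L₂ := by
      intro i
      have hm := hfA3 i
      rw [hL] at hm
      obtain ⟨a, ha, b, hb, hab⟩ := hm
      by_cases hA : a = 0
      · right; rw [hab, hA, zero_add]; exact hb
      by_cases hB : b = 0
      · left; rw [hab, hB, add_zero]; exact ha
      exfalso
      have h3 : ip (f i) (f i) = ip a a + 2 * ip a b + ip b b := by rw [hab, ip_add_add]
      have hab0 : ip a b = 0 := horth a ha b hb
      have h2a : (2:ℝ) ≤ ip a a := a3_min_norm hC hmin (hL₁sub ha) hA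
      have h2b : (2:ℝ) ≤ ip b b := a3_min_norm hC hmin (hL₂sub hb) hB
      rw [hipff i] at h3
      rw [hab0] at h3
      linarith
    set S : Set (Fin n) := {i | f i ∈ L₁} with hS
    have hL₂f : ∀ i ∉ S, f i ∈ L₂ := fun i hi => (hsplit i).resolve_left hi
    have hL₁supp : ∀ a ∈ L₁, ∀ i ∉ S, a i = 0 := by
      intro a ha i hi
      have h0 := horth a ha (f i) (hL₂f i hi)
      rw [hipf_right i a] at h0
      exact (mul_eq_zero.mp h0).resolve_right sqrt3_ne
    have hL₂supp : ∀ b ∈ L₂, ∀ i ∈ S, b i = 0 := by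
      intro b hb i hi
      have h0 := horth (f i) hi b hb
      rw [hipf_left i b] at h0
      exact (mul_eq_zero.mp h0).resolve_left sqrt3_ne
    -- key: the S-indicator of any lattice vector lies in L₁
    have hkey : ∀ v ∈ A3 C, ∃ a ∈ L₁, ∀ i, a i = if i ∈ S then v i else 0 := by
      intro v hv
      rw [hL] at hv
      obtain ⟨a, ha, b, hb, rfl⟩ := hv
      refine ⟨a, ha, fun i => ?_⟩
      by_cases hi : i ∈ S
      · simp [hi, hL₂supp b hb i hi]
      · simp [hi, hL₁supp a ha i hi]
    -- C is closed under S-indicator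
    have hindC : ∀ x ∈ C, S.indicator x ∈ C := by
      intro x hx
      set y : Fin n → ℤ := fun i => ((x i).val : ℤ) with hy
      have hyx : (fun i => ((y i : ZMod 3))) = x := by
        funext i
        simp only [hy]
        push_cast
        simp [ZMod.natCast_val]
      have hv : (fun i => (y i : ℝ) / Real.sqrt 3) ∈ A3 C := ⟨y, by rw [hyx]; exact hx, rfl⟩
      obtain ⟨a, haL, haeq⟩ := hkey _ hv
      obtain ⟨z, hzC, hza⟩ := hL₁sub haL
      have hzy : ∀ i, z i = if i ∈ S then y i else 0 := by
        intro i
        have h1 : (z i : ℝ) / Real.sqrt 3 = if i ∈ S then (y i : ℝ) / Real.sqrt 3 else 0 := by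
          rw [← congrFun hza i]; exact haeq i
        by_cases hi : i ∈ S
        · rw [if_pos hi] at h1 ⊢
          field_simp at h1; exact_mod_cast h1
        · rw [if_neg hi] at h1 ⊢
          rcases div_eq_zero_iff.mp h1 with h | h
          · exact_mod_cast h
          · exact absurd h sqrt3_ne
      have : S.indicator x = fun i => ((z i : ZMod 3)) := by
        funext i
        rw [hzy i]
        by_cases hi : i ∈ S
        · rw [if_pos hi, Set.indicator_of_mem hi, ← congrFun hyx i]
        · rw [if_neg hi, Set.indicator_of_notMem hi]; simp
      rw [this]; exact hzC
    -- nonemptiness of S and Sᶜ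
    have hSne : ∃ i, i ∈ S := by
      by_contra h
      push_neg at h
      exact ha₀ne (funext fun i => hL₁supp a₀ ha₀ i (h i))
    have hScne : ∃ i, i ∉ S := by
      by_contra h
      push_neg at h
      exact hb₀ne (funext fun i => hL₂supp b₀ hb₀ i (h i))
    -- a single-coordinate vector can't be in C
    have hdelta : ∀ i₀ : Fin n, (∀ x ∈ C, x i₀ = 0) → False := by
      intro i₀ hall
      set δ : Fin n → ZMod 3 := fun j => if j = i₀ then 1 else 0 with hδdef
      have hδ : δ ∈ C := by
        rw [← hC]
        intro y hy
        have h1 : ∑ j, δ j * y j = y i₀ := by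
          rw [Finset.sum_eq_single i₀]
          · simp [hδdef]
          · intro j _ hj; simp [hδdef, hj]
          · simp
        rw [h1, hall y hy]
      have hδne : δ ≠ 0 := by
        intro h0
        have := congrFun h0 i₀
        simp [hδdef] at this
      have h6 := hmin _ hδ hδne
      have hwt : wt δ = 1 := by
        rw [wt]
        have h2 : Finset.filter (fun j => δ j ≠ 0) Finset.univ = {i₀} := by
          ext j
          by_cases hj : j = i₀ <;> simp [hδdef, hj]
        rw [h2, Finset.card_singleton]
      omega
    refine ⟨S, ?_, ?_, hindC⟩
    · by_contra hcontra
      push_neg at hcontra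
      obtain ⟨i₀, hi₀⟩ := hSne
      refine hdelta i₀ fun x hx => ?_
      have hix : S.indicator x ∈ C := hindC x hx
      have hsupp : ∀ i ∉ S, S.indicator x i = 0 := fun i hi => Set.indicator_of_notMem hi x
      have h0 : S.indicator x = 0 := by
        by_contra hne
        obtain ⟨i, hiS, hxi⟩ := hcontra _ hix hne
        exact hxi (hsupp i hiS)
      have := congrFun h0 i₀
      rwa [Set.indicator_of_mem hi₀ x] at this
    · by_contra hcontra
      push_neg at hcontra
      obtain ⟨i₀, hi₀⟩ := hScne
      refine hdelta i₀ fun x hx => ?_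
      have hix : x - S.indicator x ∈ C := sd_sub hC hx (hindC x hx)
      have hsupp : ∀ i ∈ S, (x - S.indicator x) i = 0 := fun i hi => by
        simp [Set.indicator_of_mem hi x]
      have h0 : x - S.indicator x = 0 := by
        by_contra hne
        obtain ⟨i, hiS, hxi⟩ := hcontra _ hix hne
        exact hxi (hsupp i hiS)
      have := congrFun h0 i₀
      simp [Set.indicator_of_notMem hi₀ x] at this
      exact this

end Ternary
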